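/- Let A be an essentially small strongly pretriangulated dg-category with a bounded t-structure. Then A, embedded via Yoneda in Ind^{dg,Q,+}(A) with the induced t-structure, coincides with the full dg-subcategory hfp^b of bounded homotopically finitely presented objects: A ≅ { X ∈ Ind^{dg,Q,+}(A) : H^n_t(X) ∈ fp(heart) for all n, and X is bounded for the t-structure }. -/

import Mathlib

/-!
STATEMENT 14: Let `A` be an essentially small strongly pretriangulated
dg-category with a bounded t-structure.  Then `A`, embedded via Yoneda into
`Ind^{dg,Q,+}(A)` with the induced t-structure, coincides with the full
subcategory `hfp^b` of bounded homotopically finitely presented objects.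

Model: `D` is (the homotopy category of) `Ind^{dg,Q,+}(A)` with its induced
t-structure `t` and truncation functors `τ_{≤n}`, `τ_{≥n}`, and `ι : A ⥤ D` is
the (fully faithful, t-exact) Yoneda embedding.  Since the heart of `t` is
`Ind(H⁰(A)^♥)`, whose finitely presented objects are exactly `H⁰(A)^♥`, the
condition `Hⁿ_t(X) ∈ fp(heart)` is expressed as: `τ_{≤n} τ_{≥n} X` is isomorphic
to `(ι A₀)⟦−n⟧` for some object `A₀` of the heart of the t-structure on `A`.
-/

open CategoryTheory Limits Pretriangulated Triangulated

namespace Stmt14Aux_open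
end Stmt14Aux_open
section Stmt14AuxSec
open CategoryTheory.Category ZeroObject

namespace Stmt14Aux

variable {C : Type*} [Category C] [Preadditive C] [HasZeroObject C] [HasShift C ℤ]
  [∀ n : ℤ, (shiftFunctor C n).Additive] [Pretriangulated C] (t : TStructure C)

lemma tzero {a b : ℤ} (hab : a < b) {X Y : C} (hX : t.le a X) (hY : t.ge b Y) (f : X ⟶ Y) :
    f = 0 := by
  have hY' : t.ge (a + 1) Y := t.ge_antitone (by omega) Y hY
  have h := t.zero' ((shiftFunctor C a).map f)
    (t.le_shift a a 0 (by omega) X hX) (t.ge_shift (a + 1) a 1 (by omega) Y hY')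
  exact (shiftFunctor C a).map_eq_zero_iff.1 h

lemma le_of_orth {X : C} {n : ℤ} (h : ∀ W : C, t.ge (n + 1) W → ∀ f : X ⟶ W, f = 0) :
    t.le n X := by
  obtain ⟨P, Q, hP, hQ, f, g, hco, hT⟩ := t.exists_triangle X n (n + 1) rfl
  have hg : g = 0 := h Q hQ g
  have hQ0 : IsZero Q := by
    rw [IsZero.iff_id_eq_zero]
    obtain ⟨r, hr⟩ := Triangle.yoneda_exact₃ _ hT (𝟙 Q) (by simp [hg]; exact zero_comp)
    rw [hr, tzero t (show n - 1 < n + 1 by omega)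
      (t.le_shift n 1 (n - 1) (by omega) P hP) hQ r]; exact comp_zero
  have : IsIso f := (Triangle.isZero₃_iff_isIso₁ _ hT).1 hQ0
  exact (ObjectProperty.prop_iff_of_iso (t.le n) (asIso f)).1 hP

lemma ge_of_orth {X : C} {n : ℤ} (h : ∀ W : C, t.le (n - 1) W → ∀ f : W ⟶ X, f = 0) :
    t.ge n X := by
  obtain ⟨P, Q, hP, hQ, f, g, hco, hT⟩ := t.exists_triangle X (n - 1) n (by omega)
  have hf : f = 0 := h P hP f
  have hP0 : IsZero P := by
    rw [IsZero.iff_id_eq_zero]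
    obtain ⟨r, hr⟩ := Triangle.coyoneda_exact₂ _ (inv_rot_of_distTriang _ hT) (𝟙 P)
      (by simp [hf]; exact comp_zero)
    rw [hr, tzero t (show n - 1 < n + 1 by omega) hP
      (t.ge_shift n (-1) (n + 1) (by omega) Q hQ) r]; exact zero_comp
  have : IsIso g := (Triangle.isZero₁_iff_isIso₂ _ hT).1 hP0
  exact (ObjectProperty.prop_iff_of_iso (t.ge n) (asIso g)).2 hQ

lemma le_of_isZero {X : C} (hX : IsZero X) (n : ℤ) : t.le n X :=
  le_of_orth t (fun _ _ f => hX.eq_of_src f 0)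

lemma ge_of_isZero {X : C} (hX : IsZero X) (n : ℤ) : t.ge n X :=
  ge_of_orth t (fun _ _ f => hX.eq_of_tgt f 0)

lemma le_ext (T : Triangle C) (hT : T ∈ distTriang C) {n : ℤ} (h₁ : t.le n T.obj₁)
    (h₃ : t.le n T.obj₃) : t.le n T.obj₂ := by
  apply le_of_orth
  intro W hW φ
  obtain ⟨ψ, hψ⟩ := Triangle.yoneda_exact₂ _ hT φ (tzero t (by omega : n < n + 1) h₁ hW _)
  rw [hψ, tzero t (by omega : n < n + 1) h₃ hW ψ, comp_zero]

lemma ge_ext (T : Triangle C) (hT : T ∈ distTriang C) {n : ℤ} (h₁ : t.ge n T.obj₁)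
    (h₃ : t.ge n T.obj₃) : t.ge n T.obj₂ := by
  apply ge_of_orth
  intro W hW φ
  obtain ⟨ψ, hψ⟩ := Triangle.coyoneda_exact₂ _ hT φ (tzero t (by omega : n - 1 < n) hW h₃ _)
  rw [hψ, tzero t (by omega : n - 1 < n) hW h₁ ψ, zero_comp]

/-- Bundled truncation data for a t-structure. -/
structure TruncData (t : TStructure C) where
  τle : ℤ → C ⥤ C
  τge : ℤ → C ⥤ C
  hle : ∀ (i : ℤ) (X : C), t.le i ((τle i).obj X)
  hge : ∀ (i : ℤ) (X : C), t.ge i ((τge i).obj X)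
  η : ∀ i : ℤ, τle i ⟶ 𝟭 C
  ε : ∀ i : ℤ, 𝟭 C ⟶ τge i
  htri : ∀ (i : ℤ) (X : C), ∃ d : (τge (i + 1)).obj X ⟶ ((τle i).obj X)⟦(1 : ℤ)⟧,
    Triangle.mk ((η i).app X) ((ε (i + 1)).app X) d ∈ distTriang C

variable (td : TruncData t)

lemma isZero_τle (n m : ℤ) (hnm : n + 1 = m) (X : C) (hX : t.ge m X) :
    IsZero ((td.τle n).obj X) := by
  subst hnm
  obtain ⟨d, hT⟩ := td.htri n X
  rw [IsZero.iff_id_eq_zero]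
  have h1 : (td.η n).app X = 0 := tzero t (by omega : n < n + 1) (td.hle n X) hX _
  obtain ⟨r, hr⟩ := Triangle.coyoneda_exact₂ _ (inv_rot_of_distTriang _ hT)
    (𝟙 ((td.τle n).obj X)) (by simp [h1]; exact comp_zero)
  rw [hr, tzero t (show n < n + 2 by omega) (td.hle n X)
    (t.ge_shift (n + 1) (-1) (n + 2) (by omega) _ (td.hge (n + 1) X)) r]; exact zero_comp

lemma isZero_τge (n m : ℤ) (hnm : n + 1 = m) (X : C) (hX : t.le n X) :
    IsZero ((td.τge m).obj X) := by
  subst hnm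
  obtain ⟨d, hT⟩ := td.htri n X
  rw [IsZero.iff_id_eq_zero]
  have h2 : (td.ε (n + 1)).app X = 0 := tzero t (by omega : n < n + 1) hX (td.hge (n + 1) X) _
  obtain ⟨r, hr⟩ := Triangle.yoneda_exact₃ _ hT (𝟙 ((td.τge (n + 1)).obj X)) (by simp [h2]; exact zero_comp)
  rw [hr, tzero t (show n - 1 < n + 1 by omega)
    (t.le_shift n 1 (n - 1) (by omega) _ (td.hle n X)) (td.hge (n + 1) X) r]; exact comp_zero

lemma isIso_η (n : ℤ) (X : C) (hX : t.le n X) : IsIso ((td.η n).app X) := by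
  obtain ⟨d, hT⟩ := td.htri n X
  exact (Triangle.isZero₃_iff_isIso₁ _ hT).1 (isZero_τge t td n (n + 1) rfl X hX)

lemma isIso_ε (n m : ℤ) (hm : n + 1 = m) (X : C) (hX : t.ge m X) :
    IsIso ((td.ε m).app X) := by
  subst hm
  obtain ⟨d, hT⟩ := td.htri n X
  exact (Triangle.isZero₁_iff_isIso₂ _ hT).1 (isZero_τle t td n (n + 1) rfl X hX)

lemma trunc_unique (m n : ℤ) (hmn : m + 1 = n) (T : Triangle C)
    (hT : T ∈ distTriang C) (hP : t.le m T.obj₁) (hQ : t.ge n T.obj₃) :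
    Nonempty ((td.τle m).obj T.obj₂ ≅ T.obj₁) ∧ Nonempty ((td.τge n).obj T.obj₂ ≅ T.obj₃) := by
  subst hmn
  obtain ⟨d, hT'⟩ := td.htri m T.obj₂
  obtain ⟨u, hu⟩ := Triangle.coyoneda_exact₂ _ hT ((td.η m).app T.obj₂)
    (tzero t (by omega : m < m + 1) (td.hle m T.obj₂) hQ _)
  obtain ⟨v, hv⟩ := Triangle.coyoneda_exact₂ _ hT' T.mor₁
    (tzero t (by omega : m < m + 1) hP (td.hge (m + 1) T.obj₂) _)
  obtain ⟨p, hp⟩ := Triangle.yoneda_exact₂ _ hT ((td.ε (m + 1)).app T.obj₂)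
    (tzero t (by omega : m < m + 1) hP (td.hge (m + 1) T.obj₂) _)
  obtain ⟨q, hq⟩ := Triangle.yoneda_exact₂ _ hT' T.mor₂
    (tzero t (by omega : m < m + 1) (td.hle m T.obj₂) hQ _)
  dsimp only [Triangle.mk, Triangle.mk_obj₁, Triangle.mk_obj₂, Triangle.mk_obj₃, Triangle.mk_mor₁,
    Triangle.mk_mor₂, Triangle.mk_mor₃] at hu hv hp hq u v p q
  constructor
  · refine ⟨⟨u, v, ?_, ?_⟩⟩
    · have h1 : (u ≫ v - 𝟙 ((td.τle m).obj T.obj₂)) ≫ (td.η m).app T.obj₂ = 0 := by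
        rw [Preadditive.sub_comp, id_comp, assoc, ← hv, ← hu, sub_self]
      obtain ⟨r, hr⟩ := Triangle.coyoneda_exact₂ _ (inv_rot_of_distTriang _ hT') _ h1
      rw [← sub_eq_zero, hr, tzero t (show m < m + 2 by omega) (td.hle m T.obj₂)
        (t.ge_shift (m + 1) (-1) (m + 2) (by omega) _ (td.hge (m + 1) T.obj₂)) r]; exact zero_comp
    · have h1 : (v ≫ u - 𝟙 T.obj₁) ≫ T.mor₁ = 0 := by
        rw [Preadditive.sub_comp, id_comp, assoc, ← hu, ← hv, sub_self]
      obtain ⟨r, hr⟩ := Triangle.coyoneda_exact₂ _ (inv_rot_of_distTriang _ hT) _ h1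
      rw [← sub_eq_zero, hr, tzero t (show m < m + 2 by omega) hP
        (t.ge_shift (m + 1) (-1) (m + 2) (by omega) _ hQ) r]; exact zero_comp
  · refine ⟨⟨q, p, ?_, ?_⟩⟩
    · have h1 : (td.ε (m + 1)).app T.obj₂ ≫ (q ≫ p - 𝟙 ((td.τge (m + 1)).obj T.obj₂)) = 0 := by
        rw [Preadditive.comp_sub, comp_id, ← assoc, ← hq, ← hp, sub_self]
      obtain ⟨r, hr⟩ := Triangle.yoneda_exact₃ _ hT' _ h1
      rw [← sub_eq_zero, hr, tzero t (show m - 1 < m + 1 by omega)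
        (t.le_shift m 1 (m - 1) (by omega) _ (td.hle m T.obj₂)) (td.hge (m + 1) T.obj₂) r]
      exact comp_zero
    · have h1 : T.mor₂ ≫ (p ≫ q - 𝟙 T.obj₃) = 0 := by
        rw [Preadditive.comp_sub, comp_id, ← assoc, ← hp, ← hq, sub_self]
      obtain ⟨r, hr⟩ := Triangle.yoneda_exact₃ _ hT _ h1
      rw [← sub_eq_zero, hr, tzero t (show m - 1 < m + 1 by omega)
        (t.le_shift m 1 (m - 1) (by omega) _ hP) hQ r]; exact comp_zero

lemma ge_transfer (m n : ℤ) (hmn : m + 1 = n) (T : Triangle C)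
    (hT : T ∈ distTriang C) (hP : t.le m T.obj₁) :
    Nonempty ((td.τge n).obj T.obj₃ ≅ (td.τge n).obj T.obj₂) := by
  subst hmn
  obtain ⟨dX, hTX⟩ := td.htri m T.obj₂
  obtain ⟨dZ, hTZ⟩ := td.htri m T.obj₃
  obtain ⟨g₁, hg₁⟩ := Triangle.yoneda_exact₂ _ hT ((td.ε (m + 1)).app T.obj₂)
    (tzero t (by omega : m < m + 1) hP (td.hge (m + 1) T.obj₂) _)
  obtain ⟨u, hu⟩ := Triangle.yoneda_exact₂ _ hTZ g₁
    (tzero t (by omega : m < m + 1) (td.hle m T.obj₃) (td.hge (m + 1) T.obj₂) _)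
  obtain ⟨v, hv⟩ := Triangle.yoneda_exact₂ _ hTX (T.mor₂ ≫ (td.ε (m + 1)).app T.obj₃)
    (tzero t (by omega : m < m + 1) (td.hle m T.obj₂) (td.hge (m + 1) T.obj₃) _)
  dsimp only [Triangle.mk, Triangle.mk_obj₁, Triangle.mk_obj₂, Triangle.mk_obj₃, Triangle.mk_mor₁,
    Triangle.mk_mor₂, Triangle.mk_mor₃] at hg₁ hu hv u v
  have e1 : T.mor₂ ≫ (td.ε (m + 1)).app T.obj₃ ≫ u = (td.ε (m + 1)).app T.obj₂ := by
    rw [← hu, ← hg₁]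
  refine ⟨⟨u, v, ?_, ?_⟩⟩
  · -- u ≫ v = 𝟙
    have e2 : T.mor₂ ≫ ((td.ε (m + 1)).app T.obj₃ ≫ (u ≫ v)) =
        T.mor₂ ≫ (td.ε (m + 1)).app T.obj₃ := by
      calc T.mor₂ ≫ ((td.ε (m + 1)).app T.obj₃ ≫ (u ≫ v))
          = (T.mor₂ ≫ (td.ε (m + 1)).app T.obj₃ ≫ u) ≫ v := by simp only [assoc]
        _ = (td.ε (m + 1)).app T.obj₂ ≫ v := by rw [e1]
        _ = T.mor₂ ≫ (td.ε (m + 1)).app T.obj₃ := hv.symm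
    have hw : T.mor₂ ≫ ((td.ε (m + 1)).app T.obj₃ ≫ (u ≫ v) - (td.ε (m + 1)).app T.obj₃) = 0 := by
      rw [Preadditive.comp_sub, e2, sub_self]
    obtain ⟨r, hr⟩ := Triangle.yoneda_exact₃ _ hT _ hw
    have hr0 : r = 0 := tzero t (show m - 1 < m + 1 by omega)
      (t.le_shift m 1 (m - 1) (by omega) _ hP) (td.hge (m + 1) T.obj₃) r
    have hw1 : (td.ε (m + 1)).app T.obj₃ ≫ (u ≫ v - 𝟙 ((td.τge (m + 1)).obj T.obj₃)) = 0 := by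
      rw [Preadditive.comp_sub, comp_id, hr, hr0, comp_zero]
    obtain ⟨r', hr'⟩ := Triangle.yoneda_exact₃ _ hTZ _ hw1
    rw [← sub_eq_zero, hr', tzero t (show m - 1 < m + 1 by omega)
      (t.le_shift m 1 (m - 1) (by omega) _ (td.hle m T.obj₃)) (td.hge (m + 1) T.obj₃) r']
    exact comp_zero
  · -- v ≫ u = 𝟙
    have e3 : (td.ε (m + 1)).app T.obj₂ ≫ (v ≫ u) = (td.ε (m + 1)).app T.obj₂ := by
      calc (td.ε (m + 1)).app T.obj₂ ≫ (v ≫ u)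
          = ((td.ε (m + 1)).app T.obj₂ ≫ v) ≫ u := by simp only [assoc]
        _ = (T.mor₂ ≫ (td.ε (m + 1)).app T.obj₃) ≫ u := by rw [← hv]
        _ = (td.ε (m + 1)).app T.obj₂ := by rw [assoc]; exact e1
    have hw : (td.ε (m + 1)).app T.obj₂ ≫ (v ≫ u - 𝟙 ((td.τge (m + 1)).obj T.obj₂)) = 0 := by
      rw [Preadditive.comp_sub, comp_id, e3, sub_self]
    obtain ⟨r, hr⟩ := Triangle.yoneda_exact₃ _ hTX _ hw
    rw [← sub_eq_zero, hr, tzero t (show m - 1 < m + 1 by omega)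
      (t.le_shift m 1 (m - 1) (by omega) _ (td.hle m T.obj₂)) (td.hge (m + 1) T.obj₂) r]
    exact comp_zero

lemma isZero_ι_zero {A : Type*} [Category A] [Preadditive A] [HasZeroObject A] [HasShift A ℤ]
    [∀ n : ℤ, (shiftFunctor A n).Additive] [Pretriangulated A]
    (ι : A ⥤ C) [ι.CommShift ℤ] [ι.IsTriangulated] : IsZero (ι.obj (0 : A)) := by
  have hT := ι.map_distinguished _ (contractible_distinguished (0 : A))
  exact Triangle.isZero₃_of_isIso₁ _ hT (by dsimp [Functor.mapTriangle]; exact (inferInstance : IsIso (ι.map (𝟙 (0 : A)))))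

lemma main_ind {A : Type*} [Category A] [Preadditive A] [HasZeroObject A] [HasShift A ℤ]
    [∀ n : ℤ, (shiftFunctor A n).Additive] [Pretriangulated A]
    (s : TStructure A) (ι : A ⥤ C) [ι.Full] [ι.Faithful] [ι.CommShift ℤ] [ι.IsTriangulated]
    (k : ℕ) :
    ∀ (a : ℤ) (X : C), t.ge a X → t.le (a + k) X →
      (∀ n : ℤ, ∃ A₀ : A, s.le 0 A₀ ∧ s.ge 0 A₀ ∧
        Nonempty ((td.τle n).obj ((td.τge n).obj X) ≅ (ι.obj A₀)⟦-n⟧)) →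
      ∃ B : A, Nonempty (X ≅ ι.obj B) := by
  induction k with
  | zero =>
    intro a X hGE hLE hH
    have hLE' : t.le a X := by simpa using hLE
    obtain ⟨A₀, -, -, ⟨e⟩⟩ := hH a
    have hi1 : IsIso ((td.ε a).app X) := isIso_ε t td (a - 1) a (by omega) X hGE
    have hX' : t.le a ((td.τge a).obj X) :=
      (ObjectProperty.prop_iff_of_iso (t.le a) (asIso ((td.ε a).app X))).1 hLE'
    have hi2 : IsIso ((td.η a).app ((td.τge a).obj X)) := isIso_η t td a _ hX'
    exact ⟨A₀⟦(-a : ℤ)⟧, ⟨asIso ((td.ε a).app X) ≪≫ (asIso ((td.η a).app _)).symm ≪≫ e ≪≫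
      ((ι.commShiftIso (-a)).app A₀).symm⟩⟩
  | succ k ih =>
    intro a X hGE hLE hH
    have hLE' : t.le (a + k + 1) X := by
      have hc : (a + ((k + 1 : ℕ) : ℤ)) = a + k + 1 := by push_cast; ring
      rwa [hc] at hLE
    obtain ⟨d, hT⟩ := td.htri a X
    set T := Triangle.mk ((td.η a).app X) ((td.ε (a + 1)).app X) d with hTdef
    obtain ⟨A₀, -, -, ⟨e₀⟩⟩ := hH a
    have hiε : IsIso ((td.ε a).app X) := isIso_ε t td (a - 1) a (by omega) X hGE
    have eY : (td.τle a).obj X ≅ ι.obj (A₀⟦(-a : ℤ)⟧) :=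
      (td.τle a).mapIso (asIso ((td.ε a).app X)) ≪≫ e₀ ≪≫ ((ι.commShiftIso (-a)).app A₀).symm
    have hZge : t.ge (a + 1) ((td.τge (a + 1)).obj X) := td.hge (a + 1) X
    have hZle : t.le (a + 1 + k) ((td.τge (a + 1)).obj X) := by
      have h3 : t.le (a + 1 + k) (T.rotate.obj₃) := by
        have h4 := t.le_shift a 1 (a - 1) (by omega) _ (td.hle a X)
        exact t.le_monotone (by omega) _ h4
      have h1 : t.le (a + 1 + k) (T.rotate.obj₁) := t.le_monotone (by omega) _ hLE'
      exact le_ext t _ (rot_of_distTriang _ hT) h1 h3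
    have hHZ : ∀ n : ℤ, ∃ A₂ : A, s.le 0 A₂ ∧ s.ge 0 A₂ ∧
        Nonempty ((td.τle n).obj ((td.τge n).obj ((td.τge (a + 1)).obj X)) ≅ (ι.obj A₂)⟦-n⟧) := by
      intro n
      by_cases hn : a + 1 ≤ n
      · obtain ⟨e⟩ := ge_transfer t td (n - 1) n (by omega) T hT
          (t.le_monotone (by omega : a ≤ n - 1) _ (td.hle a X))
        obtain ⟨A₂, h1, h2, ⟨e₂⟩⟩ := hH n
        exact ⟨A₂, h1, h2, ⟨(td.τle n).mapIso e ≪≫ e₂⟩⟩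
      · push_neg at hn
        have hZn : t.ge (n + 1) ((td.τge (a + 1)).obj X) := t.ge_antitone (by omega) _ hZge
        have hi : IsIso ((td.ε n).app ((td.τge (a + 1)).obj X)) :=
          isIso_ε t td (n - 1) n (by omega) _ (t.ge_antitone (by omega) _ hZge)
        have hZ' : t.ge (n + 1) ((td.τge n).obj ((td.τge (a + 1)).obj X)) :=
          (ObjectProperty.prop_iff_of_iso (t.ge (n + 1)) (asIso ((td.ε n).app _))).1 hZn
        have hz : IsZero ((td.τle n).obj ((td.τge n).obj ((td.τge (a + 1)).obj X))) :=
          isZero_τle t td n (n + 1) rfl _ hZ'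
        have h0 : IsZero ((ι.obj (0 : A))⟦(-n : ℤ)⟧) :=
          (shiftFunctor C (-n)).map_isZero (isZero_ι_zero ι)
        exact ⟨0, le_of_isZero s (isZero_zero A) 0, ge_of_isZero s (isZero_zero A) 0,
          ⟨hz.iso h0⟩⟩
    obtain ⟨B, ⟨eZ⟩⟩ := ih (a + 1) ((td.τge (a + 1)).obj X) hZge hZle hHZ
    set ψ' : ι.obj B ⟶ ι.obj ((A₀⟦(-a : ℤ)⟧)⟦(1 : ℤ)⟧) :=
      eZ.inv ≫ d ≫ (shiftFunctor C (1 : ℤ)).map eY.hom ≫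
        (ι.commShiftIso (1 : ℤ)).inv.app (A₀⟦(-a : ℤ)⟧) with hψ'
    obtain ⟨E, f', g', hTA⟩ := distinguished_cocone_triangle₂ (ι.preimage ψ')
    have hTD := ι.map_distinguished _ hTA
    have hcomm : T.mor₃ ≫ ((shiftFunctor C (1 : ℤ)).map eY.hom) =
        eZ.hom ≫ (ι.mapTriangle.obj (Triangle.mk f' g' (ι.preimage ψ'))).mor₃ := by
      dsimp [Functor.mapTriangle, Triangle.mk, T]
      rw [ι.map_preimage, hψ']
      simp
    obtain ⟨b, hb1, hb2⟩ := complete_distinguished_triangle_morphism₂ _ _ hT hTD eY.hom eZ.hom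
      hcomm
    have hbi : IsIso b := by
      have := isIso₂_of_isIso₁₃
        (Triangle.homMk T (ι.mapTriangle.obj (Triangle.mk f' g' (ι.preimage ψ')))
          eY.hom b eZ.hom hb1 hb2 hcomm) hT hTD
        (by dsimp only [Triangle.homMk]; exact eY.isIso_hom)
        (by dsimp only [Triangle.homMk]; exact eZ.isIso_hom)
      exact this
    exact ⟨E, ⟨@asIso _ _ _ _ b hbi⟩⟩

end Stmt14Aux

end Stmt14AuxSec

theorem stmt14 {A D : Type*} [Category A] [Category D]
    [Preadditive A] [HasZeroObject A] [HasShift A ℤ]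
    [∀ n : ℤ, (shiftFunctor A n).Additive] [Pretriangulated A]
    [Preadditive D] [HasZeroObject D] [HasShift D ℤ]
    [∀ n : ℤ, (shiftFunctor D n).Additive] [Pretriangulated D]
    (s : TStructure A) (t : TStructure D)
    -- the t-structure on `A` is bounded
    (hbdd : ∀ X : A, ∃ n : ℕ, s.le (n : ℤ) X ∧ s.ge (-(n : ℤ)) X)
    -- the Yoneda embedding, fully faithful and t-exact
    (ι : A ⥤ D) [ι.Full] [ι.Faithful] [ι.CommShift ℤ] [ι.IsTriangulated]
    (hι_le : ∀ (n : ℤ) (X : A), s.le n X → t.le n (ι.obj X))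
    (hι_ge : ∀ (n : ℤ) (X : A), s.ge n X → t.ge n (ι.obj X))
    -- truncation data for `t`
    (τle τge : ℤ → D ⥤ D)
    (hle : ∀ (i : ℤ) (X : D), t.le i ((τle i).obj X))
    (hge : ∀ (i : ℤ) (X : D), t.ge i ((τge i).obj X))
    (η : ∀ i : ℤ, τle i ⟶ 𝟭 D) (ε : ∀ i : ℤ, 𝟭 D ⟶ τge i)
    (htri : ∀ (i : ℤ) (X : D), ∃ d : (τge (i + 1)).obj X ⟶ ((τle i).obj X)⟦(1 : ℤ)⟧,
      Triangle.mk ((η i).app X) ((ε (i + 1)).app X) d ∈ distTriang D) :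
    ∀ X : D,
      (∃ A₀ : A, Nonempty (X ≅ ι.obj A₀)) ↔
        -- `X` is bounded for the induced t-structure ...
        ((∃ M : ℕ, IsZero ((τle (-(M : ℤ) - 1)).obj X) ∧
            IsZero ((τge ((M : ℤ) + 1)).obj X)) ∧
          -- ... and all its t-cohomologies are finitely presented in the heart
          -- `Ind(H⁰(A)^♥)`, i.e. come from the heart of `A`
          (∀ n : ℤ, ∃ A₀ : A, s.le 0 A₀ ∧ s.ge 0 A₀ ∧
            Nonempty ((τle n).obj ((τge n).obj X) ≅ (ι.obj A₀)⟦-n⟧))) := by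
  intro X
  set td : Stmt14Aux.TruncData t := ⟨τle, τge, hle, hge, η, ε, htri⟩ with htd
  constructor
  · rintro ⟨A₀, ⟨e⟩⟩
    obtain ⟨M, hM1, hM2⟩ := hbdd A₀
    have hXle : t.le M X := (ObjectProperty.prop_iff_of_iso (t.le M) e).2 (hι_le M A₀ hM1)
    have hXge : t.ge (-(M : ℤ)) X :=
      (ObjectProperty.prop_iff_of_iso (t.ge (-(M : ℤ))) e).2 (hι_ge (-(M : ℤ)) A₀ hM2)
    refine ⟨⟨M, Stmt14Aux.isZero_τle t td (-(M : ℤ) - 1) (-(M : ℤ)) (by ring) X hXge,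
      Stmt14Aux.isZero_τge t td (M : ℤ) ((M : ℤ) + 1) rfl X hXle⟩, ?_⟩
    intro n
    obtain ⟨P, Q, hP, hQ, f, g, hco, hTA⟩ := s.exists_triangle A₀ (n - 1) n (by omega)
    have hTD := ι.map_distinguished _ hTA
    have hTX_dist : Triangle.mk (ι.map f ≫ e.inv) (e.hom ≫ ι.map g)
        ((ι.mapTriangle.obj (Triangle.mk f g hco)).mor₃) ∈ distTriang D := by
      refine isomorphic_distinguished _ hTD _ ?_
      exact Triangle.isoMk _ _ (Iso.refl _) e (Iso.refl _) (by dsimp [Triangle.mk, Functor.mapTriangle]; simp) (by dsimp [Triangle.mk, Functor.mapTriangle]; simp) (by dsimp [Triangle.mk, Functor.mapTriangle]; simp)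
    obtain ⟨-, ⟨e₂⟩⟩ := Stmt14Aux.trunc_unique t td (n - 1) n (by omega) _ hTX_dist
      (hι_le (n - 1) P hP) (hι_ge n Q hQ)
    obtain ⟨P', Q', hP'le, hQ', f2, g2, hco2, hTA'⟩ := s.exists_triangle Q n (n + 1) rfl
    have hP'ge : s.ge n P' := by
      refine Stmt14Aux.ge_ext s (Triangle.mk f2 g2 hco2).invRotate
        (inv_rot_of_distTriang _ hTA') ?_ ?_
      · have h5 := s.ge_shift (n + 1) (-1) (n + 2) (by omega) Q' hQ'
        exact s.ge_antitone (by omega) _ h5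
      · exact hQ
    have hTD' := ι.map_distinguished _ hTA'
    obtain ⟨⟨e₃⟩, -⟩ := Stmt14Aux.trunc_unique t td n (n + 1) rfl _ hTD'
      (hι_le n P' hP'le) (hι_ge (n + 1) Q' hQ')
    refine ⟨P'⟦(n : ℤ)⟧, s.le_shift n n 0 (by omega) P' hP'le,
      s.ge_shift n n 0 (by omega) P' hP'ge, ⟨?_⟩⟩
    exact (τle n).mapIso e₂ ≪≫ e₃ ≪≫
      ι.mapIso ((shiftFunctorCompIsoId A n (-n) (by omega)).app P').symm ≪≫
      (ι.commShiftIso (-n)).app (P'⟦(n : ℤ)⟧)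
  · rintro ⟨⟨M, hz1, hz2⟩, hH⟩
    obtain ⟨d1, hT1⟩ := htri (-(M : ℤ) - 1) X
    have hi1 : IsIso ((ε (-(M : ℤ) - 1 + 1)).app X) :=
      (Triangle.isZero₁_iff_isIso₂ _ hT1).1 hz1
    have hge1 : t.ge (-(M : ℤ) - 1 + 1) X :=
      (ObjectProperty.prop_iff_of_iso (t.ge (-(M : ℤ) - 1 + 1))
        (asIso ((ε (-(M : ℤ) - 1 + 1)).app X))).2 (hge _ X)
    have hge' : t.ge (-(M : ℤ)) X := by
      have hcast : (-(M : ℤ) - 1 + 1) = -(M : ℤ) := by ring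
      rwa [hcast] at hge1
    obtain ⟨d2, hT2⟩ := htri (M : ℤ) X
    have hi2 : IsIso ((η (M : ℤ)).app X) := (Triangle.isZero₃_iff_isIso₁ _ hT2).1 hz2
    have hle' : t.le (M : ℤ) X :=
      (ObjectProperty.prop_iff_of_iso (t.le (M : ℤ)) (asIso ((η (M : ℤ)).app X))).1 (hle (M : ℤ) X)
    have hLE2 : t.le (-(M : ℤ) + ((2 * M : ℕ) : ℤ)) X := by
      have hcast : (-(M : ℤ) + ((2 * M : ℕ) : ℤ)) = (M : ℤ) := by push_cast; ring
      rwa [hcast]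
    exact Stmt14Aux.main_ind t td s ι (2 * M) (-(M : ℤ)) X hge' hLE2 hH
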